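/- For k ≥ n ≥ 0, the number of paths from (0,0) to (n,k) in the lattice L*_CS equals Σ_{m=0}^{n} f*_m · [x^{n-m}] S(x)^{k-n}, where f*_m counts paths to (m,m) in L*_CS and S(x) is the large Schröder generating function. -/

import Mathlib

open Finset PowerSeries

/-- Large Schröder numbers. -/
def schroeder : ℕ → ℕ
  | 0 => 1
  | n + 1 => schroeder n + ∑ i : Fin (n + 1), schroeder i * schroeder (n - i)

/-- The points visited by a path (a list of steps) starting at (0,0). -/
def pts (l : List (ℤ × ℤ)) : List (ℤ × ℤ) :=
  l.scanl (fun p s => (p.1 + s.1, p.2 + s.2)) (0, 0)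

/-- The endpoint of a path starting at (0,0). -/
def endPt (l : List (ℤ × ℤ)) : ℤ × ℤ :=
  ((l.map Prod.fst).sum, (l.map Prod.snd).sum)

/-- All steps are unit steps (1,0) or (0,1). -/
def unitSteps (l : List (ℤ × ℤ)) : Prop := ∀ s ∈ l, s = (1, 0) ∨ s = (0, 1)

/-- All steps are (1,0), (0,1) or (1,1). -/
def schSteps (l : List (ℤ × ℤ)) : Prop := ∀ s ∈ l, s = (1, 0) ∨ s = (0, 1) ∨ s = (1, 1)

/-- The path stays weakly below the diagonal y = x. -/
def weaklyBelow (l : List (ℤ × ℤ)) : Prop := ∀ p ∈ pts l, p.2 ≤ p.1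

/-- The path stays strictly below the diagonal except at its start (0,0). -/
def strictBelowAfterStart (l : List (ℤ × ℤ)) : Prop :=
  ∀ p ∈ pts l, p ≠ (0, 0) → p.2 < p.1

/-- Validity of a path starting at point `p` in a lattice where steps (1,0) and (0,1)
are allowed everywhere and the diagonal step (1,1) is allowed exactly from points
satisfying `D`. -/
def okFrom (D : ℤ × ℤ → Prop) : ℤ × ℤ → List (ℤ × ℤ) → Prop
  | _, [] => True
  | p, s :: l => (s = (1, 0) ∨ s = (0, 1) ∨ (s = (1, 1) ∧ D p)) ∧
      okFrom D (p.1 + s.1, p.2 + s.2) l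

/-- Paths from (0,0) to (n,k) in the Catalan–Schröder lattice L_CS:
diagonal steps allowed from points (a,b) with b ≥ a. -/
def LCS (n k : ℕ) : Set (List (ℤ × ℤ)) :=
  {l | okFrom (fun p => p.1 ≤ p.2) (0, 0) l ∧ endPt l = ((n : ℤ), (k : ℤ))}

/-- Paths from (0,0) to (n,k) in the lattice L*_CS:
diagonal steps allowed only from points (a,b) with b > a. -/
def LCSstar (n k : ℕ) : Set (List (ℤ × ℤ)) :=
  {l | okFrom (fun p => p.1 < p.2) (0, 0) l ∧ endPt l = ((n : ℤ), (k : ℤ))}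

/-- Weakly subdiagonal unit-step paths from (0,0) to (n,k). -/
def CPath (n k : ℕ) : Set (List (ℤ × ℤ)) :=
  {l | unitSteps l ∧ endPt l = ((n : ℤ), (k : ℤ)) ∧ weaklyBelow l}

/-- Weakly subdiagonal paths from (0,0) to (n,k) with steps (1,0),(0,1),(1,1). -/
def SPath (n k : ℕ) : Set (List (ℤ × ℤ)) :=
  {l | schSteps l ∧ endPt l = ((n : ℤ), (k : ℤ)) ∧ weaklyBelow l}

/-- Number of paths from (0,0) to (n,n) in L_CS. -/
noncomputable def fCS (n : ℕ) : ℕ := Nat.card ↥(LCS n n)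

/-- Number of paths from (0,0) to (n,n) in L*_CS. -/
noncomputable def fCSstar (n : ℕ) : ℕ := Nat.card ↥(LCSstar n n)

/-- Generating function of the Catalan numbers. -/
noncomputable def catalanGF : PowerSeries ℤ := PowerSeries.mk fun n => (catalan n : ℤ)

/-- Generating function of the large Schröder numbers. -/
noncomputable def schroederGF : PowerSeries ℤ := PowerSeries.mk fun n => (schroeder n : ℤ)

/-- Generating function F(x) of diagonal path counts in L_CS. -/
noncomputable def FGF : PowerSeries ℤ := PowerSeries.mk fun n => (fCS n : ℤ)

/-- Generating function F*(x) of diagonal path counts in L*_CS. -/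
noncomputable def FstarGF : PowerSeries ℤ := PowerSeries.mk fun n => (fCSstar n : ℤ)

/-- Substitution x ↦ x² in a formal power series: g(x²). -/
noncomputable def subSq (g : PowerSeries ℤ) : PowerSeries ℤ :=
  PowerSeries.mk fun n => if 2 ∣ n then PowerSeries.coeff (n / 2) g else 0

/-- Substitution x ↦ x³ in a formal power series: g(x³). -/
noncomputable def subCube (g : PowerSeries ℤ) : PowerSeries ℤ :=
  PowerSeries.mk fun n => if 3 ∣ n then PowerSeries.coeff (n / 3) g else 0

/-! ### Auxiliary combinatorial lemmas -/

def Dstar : ℤ × ℤ → Prop := fun p => p.1 < p.2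

/-- Paths in L*_CS with arbitrary integer endpoint. -/
def PS (a b : ℤ) : Set (List (ℤ × ℤ)) := {l | okFrom Dstar (0, 0) l ∧ endPt l = (a, b)}

noncomputable def AA (a b : ℤ) : ℕ := (PS a b).ncard

@[simp] lemma okFrom_nil {D : ℤ × ℤ → Prop} {p : ℤ × ℤ} : okFrom D p [] ↔ True := Iff.rfl

@[simp] lemma okFrom_cons {D : ℤ × ℤ → Prop} {p s : ℤ × ℤ} {l : List (ℤ × ℤ)} :
    okFrom D p (s :: l) ↔ (s = (1, 0) ∨ s = (0, 1) ∨ (s = (1, 1) ∧ D p)) ∧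
      okFrom D (p.1 + s.1, p.2 + s.2) l := Iff.rfl

lemma okFrom_append {D : ℤ × ℤ → Prop} {p : ℤ × ℤ} {l1 l2 : List (ℤ × ℤ)} :
    okFrom D p (l1 ++ l2) ↔ okFrom D p l1 ∧
      okFrom D (p.1 + (l1.map Prod.fst).sum, p.2 + (l1.map Prod.snd).sum) l2 := by
  induction l1 generalizing p with
  | nil => simp
  | cons s t ih =>
    have h1 : (s :: t) ++ l2 = s :: (t ++ l2) := rfl
    rw [h1, okFrom_cons, okFrom_cons, ih, and_assoc]
    have h2 : ((p.1 + s.1) + (t.map Prod.fst).sum, (p.2 + s.2) + (t.map Prod.snd).sum)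
        = (p.1 + ((s :: t).map Prod.fst).sum, p.2 + ((s :: t).map Prod.snd).sum) := by
      simp only [List.map_cons, List.sum_cons, Prod.mk.injEq]
      constructor <;> ring
    rw [h2]

lemma okFrom_steps {D : ℤ × ℤ → Prop} {p : ℤ × ℤ} {l : List (ℤ × ℤ)} (h : okFrom D p l) :
    ∀ s ∈ l, s = (1, 0) ∨ s = (0, 1) ∨ s = (1, 1) := by
  induction l generalizing p with
  | nil => simp
  | cons a t ih =>
    rw [okFrom_cons] at h
    obtain ⟨h1, h2⟩ := h
    intro s hs
    rcases List.mem_cons.mp hs with hs | hs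
    · subst hs
      rcases h1 with h | h | h
      · exact Or.inl h
      · exact Or.inr (Or.inl h)
      · exact Or.inr (Or.inr h.1)
    · exact ih h2 s hs

lemma step_nonneg {s : ℤ × ℤ} (h : s = (1, 0) ∨ s = (0, 1) ∨ s = (1, 1)) :
    (0 ≤ s.1 ∧ 0 ≤ s.2) ∧ 1 ≤ s.1 + s.2 := by
  rcases h with h | h | h <;> subst h <;> norm_num

lemma okFrom_nonneg {D : ℤ × ℤ → Prop} {p : ℤ × ℤ} {l : List (ℤ × ℤ)} (h : okFrom D p l) :
    0 ≤ (l.map Prod.fst).sum ∧ 0 ≤ (l.map Prod.snd).sum ∧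
      (l.length : ℤ) ≤ (l.map Prod.fst).sum + (l.map Prod.snd).sum := by
  induction l generalizing p with
  | nil => simp
  | cons a t ih =>
    rw [okFrom_cons] at h
    obtain ⟨h1, h2⟩ := h
    obtain ⟨⟨ha1, ha2⟩, ha3⟩ := step_nonneg (okFrom_steps (okFrom_cons.2 ⟨h1, h2⟩) a (by simp))
    obtain ⟨i1, i2, i3⟩ := ih h2
    simp only [List.map_cons, List.sum_cons, List.length_cons]
    refine ⟨by linarith, by linarith, by push_cast; linarith⟩

lemma PS_finite (a b : ℤ) : (PS a b).Finite := by
  classical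
  have hT : ({(1, 0), (0, 1), (1, 1)} : Set (ℤ × ℤ)).Finite := Set.toFinite _
  have := hT.to_subtype
  have hfin := List.finite_length_le ({(1, 0), (0, 1), (1, 1)} : Set (ℤ × ℤ)) (a + b).toNat
  refine Set.Finite.subset (hfin.image (List.map Subtype.val)) ?_
  rintro l ⟨hok, hend⟩
  have hsteps : ∀ s ∈ l, s ∈ ({(1, 0), (0, 1), (1, 1)} : Set (ℤ × ℤ)) := by
    intro s hs
    rcases okFrom_steps hok s hs with h | h | h <;> simp [h]
  refine ⟨l.pmap (fun s hs => (⟨s, hs⟩ : ({(1, 0), (0, 1), (1, 1)} : Set (ℤ × ℤ)))) hsteps, ?_, ?_⟩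
  · have := okFrom_nonneg hok
    have he1 : (l.map Prod.fst).sum = a := congrArg Prod.fst hend
    have he2 : (l.map Prod.snd).sum = b := congrArg Prod.snd hend
    simp only [Set.mem_setOf_eq, List.length_pmap]
    omega
  · rw [List.map_pmap]
    have : (fun (s : ℤ × ℤ) (h : s ∈ ({(1, 0), (0, 1), (1, 1)} : Set (ℤ × ℤ))) =>
        Subtype.val (⟨s, h⟩ : ({(1, 0), (0, 1), (1, 1)} : Set (ℤ × ℤ)))) = fun s _ => id s := rfl
    rw [this, List.pmap_eq_map, List.map_id]

lemma endPt_append_single (t : List (ℤ × ℤ)) (s : ℤ × ℤ) :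
    endPt (t ++ [s]) = ((endPt t).1 + s.1, (endPt t).2 + s.2) := by
  simp [endPt]

lemma PS_nil : ([] : List (ℤ × ℤ)) ∈ PS 0 0 := ⟨trivial, by simp [endPt]⟩

lemma PS_zero : PS 0 0 = {[]} := by
  ext l
  constructor
  · rintro ⟨hok, hend⟩
    obtain ⟨h1, h2, h3⟩ := okFrom_nonneg hok
    have he1 : (l.map Prod.fst).sum = 0 := congrArg Prod.fst hend
    have he2 : (l.map Prod.snd).sum = 0 := congrArg Prod.snd hend
    have : l.length = 0 := by omega
    simp [List.length_eq_zero_iff.mp this]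
  · rintro rfl
    exact PS_nil

lemma PS_empty_of_neg {a b : ℤ} (h : a < 0 ∨ b < 0) : PS a b = ∅ := by
  ext l
  simp only [Set.mem_empty_iff_false, iff_false]
  rintro ⟨hok, hend⟩
  obtain ⟨h1, h2, _⟩ := okFrom_nonneg hok
  have he1 : (l.map Prod.fst).sum = a := congrArg Prod.fst hend
  have he2 : (l.map Prod.snd).sum = b := congrArg Prod.snd hend
  omega

lemma PS_decomp {a b : ℤ} (hab : ¬(a = 0 ∧ b = 0)) :
    PS a b = ((fun l => l ++ [((1 : ℤ), (0 : ℤ))]) '' PS (a - 1) b) ∪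
      ((fun l => l ++ [((0 : ℤ), (1 : ℤ))]) '' PS a (b - 1)) ∪
      ((fun l => l ++ [((1 : ℤ), (1 : ℤ))]) '' (if a < b then PS (a - 1) (b - 1) else ∅)) := by
  ext l
  constructor
  · rintro ⟨hok, hend⟩
    have hne : l ≠ [] := by
      rintro rfl
      simp only [endPt, List.map_nil, List.sum_nil, Prod.mk.injEq] at hend
      exact hab ⟨hend.1.symm, hend.2.symm⟩
    obtain ⟨t, s, rfl⟩ : ∃ t s, l = t ++ [s] :=
      ⟨l.dropLast, l.getLast hne, (List.dropLast_append_getLast hne).symm⟩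
    rw [okFrom_append] at hok
    obtain ⟨hok1, hok2⟩ := hok
    have hs := (okFrom_cons.mp hok2).1
    rw [endPt_append_single] at hend
    rw [Prod.mk.injEq] at hend
    rcases hs with h | h | ⟨h, hD⟩
    · subst h
      refine Or.inl (Or.inl ⟨t, ⟨hok1, ?_⟩, rfl⟩)
      rw [Prod.ext_iff]
      constructor <;> simp <;> omega
    · subst h
      refine Or.inl (Or.inr ⟨t, ⟨hok1, ?_⟩, rfl⟩)
      rw [Prod.ext_iff]
      constructor <;> simp <;> omega
    · subst h
      simp only [Dstar, zero_add] at hD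
      have hab2 : a < b := by
        simp only [Prod.fst, Prod.snd] at hend
        have e1 : (t.map Prod.fst).sum = (endPt t).1 := rfl
        have e2 : (t.map Prod.snd).sum = (endPt t).2 := rfl
        rw [e1, e2] at hD
        omega
      refine Or.inr ⟨t, ?_, rfl⟩
      rw [if_pos hab2]
      refine ⟨hok1, ?_⟩
      rw [Prod.ext_iff]
      constructor <;> simp <;> omega
  · rintro ((⟨t, ⟨hok1, hend1⟩, rfl⟩ | ⟨t, ⟨hok1, hend1⟩, rfl⟩) | ⟨t, ht, rfl⟩)
    · refine ⟨okFrom_append.mpr ⟨hok1, okFrom_cons.2 ⟨Or.inl rfl, trivial⟩⟩, ?_⟩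
      rw [endPt_append_single, hend1]
      simp only [Prod.mk.injEq]
      constructor <;> ring
    · refine ⟨okFrom_append.mpr ⟨hok1, okFrom_cons.2 ⟨Or.inr (Or.inl rfl), trivial⟩⟩, ?_⟩
      rw [endPt_append_single, hend1]
      simp only [Prod.mk.injEq]
      constructor <;> ring
    · split_ifs at ht with hc
      · obtain ⟨hok1, hend1⟩ := ht
        have hD : Dstar ((0 : ℤ) + (t.map Prod.fst).sum, (0 : ℤ) + (t.map Prod.snd).sum) := by
          simp only [Dstar, zero_add]
          have e1 : (t.map Prod.fst).sum = (endPt t).1 := rfl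
          have e2 : (t.map Prod.snd).sum = (endPt t).2 := rfl
          rw [e1, e2, hend1]
          simp only
          omega
        refine ⟨okFrom_append.mpr ⟨hok1, okFrom_cons.2 ⟨Or.inr (Or.inr ⟨rfl, hD⟩), trivial⟩⟩, ?_⟩
        rw [endPt_append_single, hend1]
        simp only [Prod.mk.injEq]
        constructor <;> ring
      · exact absurd ht (Set.notMem_empty t)

lemma disj_img {x y : ℤ × ℤ} (hxy : x ≠ y) (S T : Set (List (ℤ × ℤ))) :
    Disjoint ((fun l => l ++ [x]) '' S) ((fun l => l ++ [y]) '' T) := by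
  rw [Set.disjoint_left]
  rintro l ⟨t, _, rfl⟩ ⟨u, _, h⟩
  apply hxy
  have h1 : (u ++ [y]).getLast? = (t ++ [x]).getLast? := congrArg List.getLast? h
  rw [List.getLast?_concat, List.getLast?_concat] at h1
  exact (Option.some_injective _ h1).symm

lemma AA_rec {a b : ℤ} (hab : ¬(a = 0 ∧ b = 0)) :
    AA a b = AA (a - 1) b + AA a (b - 1) + (if a < b then AA (a - 1) (b - 1) else 0) := by
  classical
  have hif : (if a < b then PS (a - 1) (b - 1) else ∅).Finite := by
    split_ifs
    · exact PS_finite _ _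
    · exact Set.finite_empty
  have f1 : (((fun l => l ++ [((1 : ℤ), (0 : ℤ))]) '' PS (a - 1) b)).Finite :=
    (PS_finite _ _).image _
  have f2 : (((fun l => l ++ [((0 : ℤ), (1 : ℤ))]) '' PS a (b - 1))).Finite :=
    (PS_finite _ _).image _
  have f3 : (((fun l => l ++ [((1 : ℤ), (1 : ℤ))]) '' (if a < b then PS (a - 1) (b - 1) else ∅))).Finite :=
    hif.image _
  have d12 : Disjoint ((fun l => l ++ [((1 : ℤ), (0 : ℤ))]) '' PS (a - 1) b)
      ((fun l => l ++ [((0 : ℤ), (1 : ℤ))]) '' PS a (b - 1)) := disj_img (by norm_num) _ _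
  have d13 : Disjoint (((fun l => l ++ [((1 : ℤ), (0 : ℤ))]) '' PS (a - 1) b) ∪
      ((fun l => l ++ [((0 : ℤ), (1 : ℤ))]) '' PS a (b - 1)))
      ((fun l => l ++ [((1 : ℤ), (1 : ℤ))]) '' (if a < b then PS (a - 1) (b - 1) else ∅)) := by
    refine Set.disjoint_union_left.mpr ⟨disj_img (by norm_num) _ _, disj_img (by norm_num) _ _⟩
  have inj : ∀ s : ℤ × ℤ, Function.Injective (fun l : List (ℤ × ℤ) => l ++ [s]) :=
    fun s => List.append_left_injective [s]
  have : AA a b = ((((fun l => l ++ [((1 : ℤ), (0 : ℤ))]) '' PS (a - 1) b) ∪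
      ((fun l => l ++ [((0 : ℤ), (1 : ℤ))]) '' PS a (b - 1))) ∪
      ((fun l => l ++ [((1 : ℤ), (1 : ℤ))]) '' (if a < b then PS (a - 1) (b - 1) else ∅))).ncard := by
    rw [AA, PS_decomp hab]
  rw [this, Set.ncard_union_eq d13 (f1.union f2) f3, Set.ncard_union_eq d12 f1 f2,
    Set.ncard_image_of_injective _ (inj _), Set.ncard_image_of_injective _ (inj _),
    Set.ncard_image_of_injective _ (inj _)]
  congr 1
  unfold AA
  split_ifs
  · rfl
  · simp

lemma AA_zero : AA 0 0 = 1 := by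
  unfold AA
  rw [PS_zero, Set.ncard_singleton]

lemma AA_neg {a b : ℤ} (h : a < 0 ∨ b < 0) : AA a b = 0 := by
  unfold AA
  rw [PS_empty_of_neg h, Set.ncard_empty]

lemma card_LCSstar (n k : ℕ) : Nat.card ↥(LCSstar n k) = AA n k := by
  rw [show LCSstar n k = PS n k from rfl, Nat.card_coe_set_eq]
  rfl

lemma fCSstar_eq (n : ℕ) : fCSstar n = AA n n := card_LCSstar n n

lemma schroederGF_eq : schroederGF = 1 + X * schroederGF + X * schroederGF ^ 2 := by
  ext n
  cases n with
  | zero =>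
    simp [schroederGF, schroeder]
  | succ n =>
    rw [map_add, map_add, PowerSeries.coeff_succ_X_mul, PowerSeries.coeff_succ_X_mul,
      PowerSeries.coeff_one, if_neg (Nat.succ_ne_zero n)]
    rw [pow_two, PowerSeries.coeff_mul, Finset.Nat.sum_antidiagonal_eq_sum_range_succ_mk]
    simp only [schroederGF, PowerSeries.coeff_mk]
    rw [schroeder]
    push_cast
    rw [Fin.sum_univ_eq_sum_range (fun i => (schroeder i : ℤ) * (schroeder (n - i) : ℤ))]
    ring

lemma coeff_zero_pow (d : ℕ) : PowerSeries.coeff 0 (schroederGF ^ d) = 1 := by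
  rw [PowerSeries.coeff_zero_eq_constantCoeff, map_pow]
  have : PowerSeries.constantCoeff schroederGF = 1 := by
    simp [schroederGF, schroeder]
  rw [this, one_pow]

lemma schroederGF_pow_succ (d : ℕ) : schroederGF ^ (d + 1) =
    schroederGF ^ d + X * schroederGF ^ (d + 1) + X * schroederGF ^ (d + 2) := by
  calc schroederGF ^ (d + 1)
      = schroederGF ^ d * (1 + X * schroederGF + X * schroederGF ^ 2) := by
        rw [← schroederGF_eq, pow_succ]
    _ = _ := by ring

lemma crec (j d : ℕ) : PowerSeries.coeff (j + 1) (schroederGF ^ (d + 1)) =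
    PowerSeries.coeff (j + 1) (schroederGF ^ d) +
    PowerSeries.coeff j (schroederGF ^ (d + 1)) +
    PowerSeries.coeff j (schroederGF ^ (d + 2)) := by
  conv_lhs => rw [schroederGF_pow_succ]
  rw [map_add, map_add, PowerSeries.coeff_succ_X_mul, PowerSeries.coeff_succ_X_mul]

lemma alg (f : ℕ → ℤ) (n d : ℕ) :
    ∑ m ∈ Finset.range (n + 1 + 1), f m * PowerSeries.coeff (n + 1 - m) (schroederGF ^ (d + 1)) =
    ∑ m ∈ Finset.range (n + 1), f m * PowerSeries.coeff (n - m) (schroederGF ^ (d + 2)) +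
    ∑ m ∈ Finset.range (n + 1 + 1), f m * PowerSeries.coeff (n + 1 - m) (schroederGF ^ d) +
    ∑ m ∈ Finset.range (n + 1), f m * PowerSeries.coeff (n - m) (schroederGF ^ (d + 1)) := by
  rw [Finset.sum_range_succ, Finset.sum_range_succ
    (fun m => f m * PowerSeries.coeff (n + 1 - m) (schroederGF ^ d))]
  have hterm : ∀ m ∈ Finset.range (n + 1),
      f m * PowerSeries.coeff (n + 1 - m) (schroederGF ^ (d + 1)) =
      f m * PowerSeries.coeff (n - m) (schroederGF ^ (d + 2)) +
      f m * PowerSeries.coeff (n + 1 - m) (schroederGF ^ d) +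
      f m * PowerSeries.coeff (n - m) (schroederGF ^ (d + 1)) := by
    intro m hm
    have hmn : m ≤ n := Nat.lt_succ_iff.mp (Finset.mem_range.mp hm)
    rw [show n + 1 - m = (n - m) + 1 by omega, crec (n - m) d]
    ring
  rw [Finset.sum_congr rfl hterm, Finset.sum_add_distrib, Finset.sum_add_distrib]
  rw [Nat.sub_self, coeff_zero_pow, coeff_zero_pow]
  ring

lemma AA_zero_row (k : ℕ) : AA 0 k = 1 := by
  induction k with
  | zero => exact AA_zero
  | succ k ih =>
    have h := AA_rec (a := 0) (b := (k + 1 : ℕ)) (by push_cast; omega)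
    rw [AA_neg (a := (0 : ℤ) - 1) (Or.inl (by norm_num)), if_pos (by push_cast; omega),
      AA_neg (a := (0 : ℤ) - 1) (Or.inl (by norm_num))] at h
    have hk : ((k + 1 : ℕ) : ℤ) - 1 = (k : ℕ) := by push_cast; ring
    rw [hk] at h
    omega

lemma key_diag (n : ℕ) : (AA n n : ℤ) =
    ∑ m ∈ Finset.range (n + 1), (AA m m : ℤ) *
      PowerSeries.coeff (n - m) (schroederGF ^ (n - n)) := by
  rw [Nat.sub_self, pow_zero, Finset.sum_range_succ]
  have h1 : ∀ m ∈ Finset.range n,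
      (AA m m : ℤ) * PowerSeries.coeff (n - m) (1 : PowerSeries ℤ) = 0 := by
    intro m hm
    rw [PowerSeries.coeff_one, if_neg (by have := Finset.mem_range.mp hm; omega)]
    ring
  rw [Finset.sum_eq_zero h1, Nat.sub_self, PowerSeries.coeff_one, if_pos rfl]
  ring

lemma key (N : ℕ) : ∀ n k : ℕ, n + k ≤ N → n ≤ k → (AA n k : ℤ) =
    ∑ m ∈ Finset.range (n + 1), (AA m m : ℤ) *
      PowerSeries.coeff (n - m) (schroederGF ^ (k - n)) := by
  induction N with
  | zero =>
    intro n k h1 h2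
    obtain ⟨rfl, rfl⟩ : n = 0 ∧ k = 0 := by omega
    exact key_diag 0
  | succ N ih =>
    intro n k h1 h2
    rcases eq_or_lt_of_le h2 with rfl | hlt
    · exact key_diag n
    rcases Nat.eq_zero_or_pos n with rfl | hn
    · have g1 : AA ((0 : ℕ) : ℤ) ((k : ℕ) : ℤ) = 1 := by rw [Nat.cast_zero]; exact AA_zero_row k
      have g2 : AA ((0 : ℕ) : ℤ) ((0 : ℕ) : ℤ) = 1 := by rw [Nat.cast_zero]; exact AA_zero
      rw [g1, Finset.sum_range_one, g2, Nat.sub_zero, Nat.sub_zero, coeff_zero_pow]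
      norm_num
    -- now 1 ≤ n < k
    obtain ⟨n', rfl⟩ : ∃ n', n = n' + 1 := ⟨n - 1, by omega⟩
    obtain ⟨d, hd⟩ : ∃ d, k = n' + 1 + (d + 1) := ⟨k - n' - 2, by omega⟩
    subst hd
    have hrec := AA_rec (a := ((n' + 1 : ℕ) : ℤ)) (b := ((n' + 1 + (d + 1) : ℕ) : ℤ))
      (by push_cast; omega)
    rw [if_pos (by push_cast; omega)] at hrec
    have c1 : ((n' + 1 : ℕ) : ℤ) - 1 = ((n' : ℕ) : ℤ) := by push_cast; ring
    have c2 : ((n' + 1 + (d + 1) : ℕ) : ℤ) - 1 = ((n' + 1 + d : ℕ) : ℤ) := by push_cast; ring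
    rw [c1, c2] at hrec
    have e1 := ih n' (n' + 1 + (d + 1)) (by omega) (by omega)
    have e2 := ih (n' + 1) (n' + 1 + d) (by omega) (by omega)
    have e3 := ih n' (n' + 1 + d) (by omega) (by omega)
    have hs1 : n' + 1 + (d + 1) - n' = d + 2 := by omega
    have hs2 : n' + 1 + d - (n' + 1) = d := by omega
    have hs3 : n' + 1 + d - n' = d + 1 := by omega
    have hs4 : n' + 1 + (d + 1) - (n' + 1) = d + 1 := by omega
    rw [hs1] at e1
    rw [hs2] at e2
    rw [hs3] at e3
    rw [hs4]
    have hrecZ : (AA (((n' + 1 : ℕ) : ℤ)) (((n' + 1 + (d + 1) : ℕ) : ℤ)) : ℤ) =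
        (AA (((n' : ℕ) : ℤ)) (((n' + 1 + (d + 1) : ℕ) : ℤ)) : ℤ) +
        (AA (((n' + 1 : ℕ) : ℤ)) (((n' + 1 + d : ℕ) : ℤ)) : ℤ) +
        (AA (((n' : ℕ) : ℤ)) (((n' + 1 + d : ℕ) : ℤ)) : ℤ) := by exact_mod_cast hrec
    rw [hrecZ, e1, e2, e3]
    exact (alg (fun m => (AA m m : ℤ)) n' d).symm

/-- for k ≥ n, the number of paths to (n,k) in L*_CS equals
Σ_{m=0}^{n} f*_m · [x^{n-m}] S(x)^{k-n}. -/
theorem LCSstar_count (n k : ℕ) (h : n ≤ k) :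
    (Nat.card ↥(LCSstar n k) : ℤ) =
      ∑ m ∈ Finset.range (n + 1),
        (fCSstar m : ℤ) * PowerSeries.coeff (n - m) (schroederGF ^ (k - n)) := by
  rw [card_LCSstar]
  rw [key (n + k) n k le_rfl h]
  refine Finset.sum_congr rfl fun m _ => ?_
  rw [fCSstar_eq]
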